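/- Let (J,B) be a pseudo-Euclidean Jordan algebra over ℂ. Then: (1) the nucleus N(J) = {x ∈ J : (x,y,z) = (y,x,z) = (y,z,x) = 0 for all y,z ∈ J} equals the center Z(J) = {x ∈ J : (x,y,z) = 0 for all y,z ∈ J}; (2) the B-orthogonal complement of Z(J) equals the associator subspace (J,J,J) = span{(x,y,z) : x,y,z ∈ J}; (3) the B-orthogonal complement of the annulator Ann(J) = {x ∈ J : xJ = 0} equals J² = span{xy : x,y ∈ J}. -/

import Mathlib

/-- The associator (x,y,z) = (xy)z − x(yz) of a (not necessarily associative) algebra. -/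
def jassoc {J : Type*} [AddCommGroup J] [Module ℂ J]
    (mul : J →ₗ[ℂ] J →ₗ[ℂ] J) (x y z : J) : J :=
  mul (mul x y) z - mul x (mul y z)

/-- In a pseudo-Euclidean Jordan algebra (J,B):
(1) the nucleus equals the center; (2) Z(J)⊥ = (J,J,J); (3) Ann(J)⊥ = J². -/
theorem stmt1
    {J : Type*} [AddCommGroup J] [Module ℂ J] [FiniteDimensional ℂ J]
    (mul : J →ₗ[ℂ] J →ₗ[ℂ] J)
    (hcomm : ∀ x y : J, mul x y = mul y x)
    (hjordan : ∀ x y : J, mul (mul x y) (mul x x) = mul x (mul y (mul x x)))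
    (B : J →ₗ[ℂ] J →ₗ[ℂ] ℂ)
    (hBsymm : ∀ x y : J, B x y = B y x)
    (hBnondeg : ∀ x : J, (∀ y : J, B x y = 0) → x = 0)
    (hBassoc : ∀ x y z : J, B (mul x y) z = B x (mul y z)) :
    ({x : J | ∀ y z : J, jassoc mul x y z = 0 ∧ jassoc mul y x z = 0 ∧ jassoc mul y z x = 0}
        = {x : J | ∀ y z : J, jassoc mul x y z = 0}) ∧
    ({x : J | ∀ z ∈ {x : J | ∀ y z : J, jassoc mul x y z = 0}, B x z = 0}
        = (Submodule.span ℂ {a : J | ∃ x y z : J, jassoc mul x y z = a} : Set J)) ∧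
    ({x : J | ∀ z ∈ {x : J | ∀ y : J, mul x y = 0}, B x z = 0}
        = (Submodule.span ℂ {a : J | ∃ x y : J, mul x y = a} : Set J)) := by
  -- B as a bilinear form
  set Bb : LinearMap.BilinForm ℂ J := B with hBb
  have hrefl : Bb.IsRefl := fun x y h => by
    rw [hBb] at *; rw [hBsymm]; exact h
  have hnd : Bb.Nondegenerate := ⟨fun m hm => hBnondeg m hm, fun m hm => hBnondeg m (fun y => (hBsymm y m).symm.trans (hm y))⟩
  -- key identity: B((x,y,z), w) = -B(x, (y,z,w))
  have hkey : ∀ x y z w : J, B (jassoc mul x y z) w = - B x (jassoc mul y z w) := by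
    intro x y z w
    simp only [jassoc, map_sub, LinearMap.sub_apply]
    rw [hBassoc (mul x y) z w, hBassoc x y (mul z w), hBassoc x (mul y z) w]
    ring
  have hkey2 : ∀ x y z w : J, B x (jassoc mul y z w) = - B (jassoc mul x y z) w := by
    intro x y z w; rw [hkey]; ring
  -- Part 1: nucleus = center
  have part1 : {x : J | ∀ y z : J, jassoc mul x y z = 0 ∧ jassoc mul y x z = 0 ∧
      jassoc mul y z x = 0} = {x : J | ∀ y z : J, jassoc mul x y z = 0} := by
    ext x
    simp only [Set.mem_setOf_eq]
    constructor
    · intro h y z; exact (h y z).1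
    · intro h y z
      have h1 : mul (mul x y) z = mul x (mul y z) := by
        have := h y z; rw [jassoc, sub_eq_zero] at this; exact this
      have h2 : mul (mul x z) y = mul x (mul z y) := by
        have := h z y; rw [jassoc, sub_eq_zero] at this; exact this
      refine ⟨h y z, ?_, ?_⟩
      · rw [jassoc, hcomm y x, h1, hcomm y (mul x z), h2, hcomm z y, sub_self]
      · rw [jassoc, hcomm (mul y z) x, hcomm z x, hcomm y (mul x z), h2, hcomm z y, sub_self]
  refine ⟨part1, ?_, ?_⟩
  · -- Part 2
    set A : Submodule ℂ J := Submodule.span ℂ {a : J | ∃ x y z : J, jassoc mul x y z = a}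
      with hA
    have hgen : ∀ x : J, (∀ y z : J, jassoc mul x y z = 0) ↔ ∀ a ∈ A, B a x = 0 := by
      intro x
      constructor
      · intro h a ha
        have hsub : {a : J | ∃ x y z : J, jassoc mul x y z = a} ⊆
            ↑(LinearMap.ker (B.flip x)) := by
          rintro a ⟨y, z, w, rfl⟩
          simp only [SetLike.mem_coe, LinearMap.mem_ker, LinearMap.flip_apply]
          rw [hBsymm, hkey2, h y z, map_zero, LinearMap.zero_apply, neg_zero]
        have := Submodule.span_le.mpr hsub ha
        simpa [LinearMap.flip_apply] using this
      · intro h y z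
        apply hBnondeg
        intro w
        rw [hkey, hBsymm]
        have : jassoc mul y z w ∈ A := Submodule.subset_span ⟨y, z, w, rfl⟩
        rw [h _ this, neg_zero]
    have hZ : {x : J | ∀ y z : J, jassoc mul x y z = 0} = ↑(Bb.orthogonal A) := by
      ext x
      simp only [Set.mem_setOf_eq, SetLike.mem_coe,
        LinearMap.BilinForm.mem_orthogonal_iff]
      exact (hgen x).trans (by rfl)
    rw [hZ]
    have horth : {x : J | ∀ z ∈ (↑(Bb.orthogonal A) : Set J), B x z = 0}
        = ↑(Bb.orthogonal (Bb.orthogonal A)) := by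
      ext x
      simp only [Set.mem_setOf_eq, SetLike.mem_coe, LinearMap.BilinForm.mem_orthogonal_iff]
      constructor
      · intro h n hn; rw [hBb]; rw [hBsymm]; exact h n hn
      · intro h n hn; rw [hBsymm]; exact h n hn
    rw [horth, LinearMap.BilinForm.orthogonal_orthogonal hnd hrefl]
  · -- Part 3
    set W : Submodule ℂ J := Submodule.span ℂ {a : J | ∃ x y : J, mul x y = a} with hW
    have hgen : ∀ x : J, (∀ y : J, mul x y = 0) ↔ ∀ a ∈ W, B a x = 0 := by
      intro x
      constructor
      · intro h a ha
        have hsub : {a : J | ∃ x y : J, mul x y = a} ⊆ ↑(LinearMap.ker (B.flip x)) := by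
          rintro a ⟨y, z, rfl⟩
          simp only [SetLike.mem_coe, LinearMap.mem_ker, LinearMap.flip_apply]
          rw [hBassoc y z x, hcomm z x, h z, map_zero]
        have := Submodule.span_le.mpr hsub ha
        simpa [LinearMap.flip_apply] using this
      · intro h y
        apply hBnondeg
        intro w
        rw [hBassoc x y w, hBsymm]
        have : mul y w ∈ W := Submodule.subset_span ⟨y, w, rfl⟩
        exact h _ this
    have hAnn : {x : J | ∀ y : J, mul x y = 0} = ↑(Bb.orthogonal W) := by
      ext x
      simp only [Set.mem_setOf_eq, SetLike.mem_coe,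
        LinearMap.BilinForm.mem_orthogonal_iff]
      exact (hgen x).trans (by rfl)
    rw [hAnn]
    have horth : {x : J | ∀ z ∈ (↑(Bb.orthogonal W) : Set J), B x z = 0}
        = ↑(Bb.orthogonal (Bb.orthogonal W)) := by
      ext x
      simp only [Set.mem_setOf_eq, SetLike.mem_coe, LinearMap.BilinForm.mem_orthogonal_iff]
      constructor
      · intro h n hn; rw [hBb]; rw [hBsymm]; exact h n hn
      · intro h n hn; rw [hBsymm]; exact h n hn
    rw [horth, LinearMap.BilinForm.orthogonal_orthogonal hnd hrefl]
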